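/- (Generalized orthogonality of the eigendata.) Under the stated hypotheses, one has X₁ᵀ M X₂ = 0 and X₁ᵀ K X₂ = 0; moreover Γ₁ := X₁ᵀ M X₁ = X_{1u}ᵀ M_u X_{1u} is symmetric and invertible, X₁ᵀ K X₁ = −Γ₁Λ₁, and Λ₁ᵀΓ₁ = Γ₁Λ₁. -/

import Mathlib

open Matrix

section AuxSylvester
open Polynomial

lemma pow_mul_comm_of_mul_eq {m n : Type*} [Fintype m] [Fintype n] [DecidableEq m] [DecidableEq n]
    (A : Matrix m m ℂ) (B : Matrix n n ℂ) (X : Matrix m n ℂ) (h : A * X = X * B) :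
    ∀ k : ℕ, A ^ k * X = X * B ^ k := by
  intro k
  induction k with
  | zero => simp
  | succ k ih =>
    rw [pow_succ, pow_succ, Matrix.mul_assoc, h, ← Matrix.mul_assoc, ih, Matrix.mul_assoc]

lemma aeval_mul_comm_of_mul_eq {m n : Type*} [Fintype m] [Fintype n] [DecidableEq m]
    [DecidableEq n] (A : Matrix m m ℂ) (B : Matrix n n ℂ) (X : Matrix m n ℂ)
    (h : A * X = X * B) (q : ℂ[X]) :
    (aeval A q) * X = X * (aeval B q) := by
  induction q using Polynomial.induction_on' with
  | add qa qb ha hb => rw [map_add, map_add, Matrix.add_mul, Matrix.mul_add, ha, hb]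
  | monomial k c =>
    rw [aeval_monomial, aeval_monomial, Algebra.algebraMap_eq_smul_one,
      Algebra.algebraMap_eq_smul_one, smul_mul_assoc, smul_mul_assoc, one_mul, one_mul,
      Matrix.smul_mul, Matrix.mul_smul, pow_mul_comm_of_mul_eq A B X h k]

lemma eval_charpoly_det {n : Type*} [Fintype n] [DecidableEq n] (M : Matrix n n ℂ) (μ : ℂ) :
    M.charpoly.eval μ = (μ • (1 : Matrix n n ℂ) - M).det := by
  rw [Matrix.charpoly, ← Polynomial.coe_evalRingHom, RingHom.map_det]
  congr 1
  ext i j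
  by_cases h : i = j <;>
    simp [h, charmatrix_apply, Matrix.one_apply, Matrix.diagonal_apply, Matrix.smul_apply]

lemma sylvester_unique {m n : Type*} [Fintype m] [Fintype n] [DecidableEq m] [DecidableEq n]
    (A : Matrix m m ℂ) (B : Matrix n n ℂ) (X : Matrix m n ℂ) (h : A * X = X * B)
    (hd : ∀ μ : ℂ, (B - μ • 1).det = 0 → (A - μ • 1).det ≠ 0) : X = 0 := by
  have hc : (aeval A B.charpoly) * X = 0 := by
    rw [aeval_mul_comm_of_mul_eq A B X h, Matrix.aeval_self_charpoly, Matrix.mul_zero]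
  have hsplit : B.charpoly = (B.charpoly.roots.map fun μ => Polynomial.X - C μ).prod :=
    (IsAlgClosed.splits _).eq_prod_roots_of_monic (Matrix.charpoly_monic B)
  have key : ∀ s : Multiset ℂ, (∀ μ ∈ s, (A - μ • 1).det ≠ 0) →
      ((aeval A) (s.map fun μ => Polynomial.X - C μ).prod).det ≠ 0 := by
    intro s
    induction s using Multiset.induction_on with
    | empty => intro _; simp
    | cons μ t ih =>
      intro hall
      rw [Multiset.map_cons, Multiset.prod_cons, _root_.map_mul, Matrix.det_mul]
      have h1 : ((aeval A) (Polynomial.X - C μ)).det ≠ 0 := by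
        simpa [Algebra.algebraMap_eq_smul_one] using hall μ (Multiset.mem_cons_self μ t)
      exact mul_ne_zero h1 (ih fun ν hν => hall ν (Multiset.mem_cons_of_mem hν))
  have hdet : (aeval A B.charpoly).det ≠ 0 := by
    have h2 := key B.charpoly.roots (fun μ hμ => by
      have hroot : B.charpoly.eval μ = 0 := isRoot_of_mem_roots hμ
      rw [eval_charpoly_det] at hroot
      have hB0 : (B - μ • 1).det = 0 := by
        rw [← neg_sub (μ • (1 : Matrix n n ℂ)) B, Matrix.det_neg, hroot, mul_zero]
      exact hd μ hB0)
    rwa [← hsplit] at h2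
  have hu : IsUnit (aeval A B.charpoly).det := isUnit_iff_ne_zero.mpr hdet
  calc X = ((aeval A B.charpoly)⁻¹ * (aeval A B.charpoly)) * X := by
          rw [Matrix.nonsing_inv_mul _ hu, Matrix.one_mul]
    _ = (aeval A B.charpoly)⁻¹ * ((aeval A B.charpoly) * X) := by rw [Matrix.mul_assoc]
    _ = 0 := by rw [hc, Matrix.mul_zero]

lemma fromCols_add' {R m n₁ n₂ : Type*} [Add R] (A₁ B₁ : Matrix m n₁ R)
    (A₂ B₂ : Matrix m n₂ R) :
    fromCols A₁ A₂ + fromCols B₁ B₂ = fromCols (A₁ + B₁) (A₂ + B₂) := by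
  ext i (j | j) <;> simp [fromCols]

lemma map_mul_ofReal {a b c : Type*} [Fintype b] (P : Matrix a b ℝ) (Q : Matrix b c ℝ) :
    (P * Q).map Complex.ofReal = P.map Complex.ofReal * Q.map Complex.ofReal := by
  ext i j
  simp [Matrix.mul_apply]

end AuxSylvester

/-- generalized orthogonality of the eigendata: for the pencil
`λM + K` with `M = diag(Mu,0)`, `Mu`, `K` symmetric invertible, `[X₁ X₂]`
invertible satisfying the eigen-equation with eigenvalue blocks `Λ₁, Λ₃` (and
the infinite part) whose complex spectra are disjoint, one has
`X₁ᵀ M X₂ = 0`, `X₁ᵀ K X₂ = 0`; moreover `Γ₁ := X₁ᵀ M X₁ = X₁ᵤᵀ Mu X₁ᵤ` is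
symmetric and invertible, `X₁ᵀ K X₁ = −Γ₁ Λ₁`, and `Λ₁ᵀ Γ₁ = Γ₁ Λ₁`. -/
theorem eigendata_generalized_orthogonality (nu nφ p : ℕ) (hp : p ≤ nu)
    (Mu : Matrix (Fin nu) (Fin nu) ℝ) (hMuSymm : Muᵀ = Mu) (hMuUnit : IsUnit Mu)
    (M : Matrix (Fin nu ⊕ Fin nφ) (Fin nu ⊕ Fin nφ) ℝ)
    (hM : M = fromBlocks Mu 0 0 0)
    (K : Matrix (Fin nu ⊕ Fin nφ) (Fin nu ⊕ Fin nφ) ℝ)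
    (hKSymm : Kᵀ = K) (hKUnit : IsUnit K)
    (X₁ : Matrix (Fin nu ⊕ Fin nφ) (Fin p) ℝ)
    (X₂ : Matrix (Fin nu ⊕ Fin nφ) (Fin (nu - p) ⊕ Fin nφ) ℝ)
    (hXinv : ∃ B : Matrix (Fin p ⊕ (Fin (nu - p) ⊕ Fin nφ)) (Fin nu ⊕ Fin nφ) ℝ,
      fromCols X₁ X₂ * B = 1 ∧ B * fromCols X₁ X₂ = 1)
    (X1u : Matrix (Fin nu) (Fin p) ℝ) (X1φ : Matrix (Fin nφ) (Fin p) ℝ)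
    (hX₁ : X₁ = fromRows X1u X1φ)
    (Λ₁ : Matrix (Fin p) (Fin p) ℝ) (hΛ₁Unit : IsUnit Λ₁)
    (Λ₃ : Matrix (Fin (nu - p)) (Fin (nu - p)) ℝ) (hΛ₃Unit : IsUnit Λ₃)
    (hdisj : ¬ ∃ μ : ℂ,
      (Λ₁.map (Complex.ofReal) - μ • 1).det = 0 ∧
      (Λ₃.map (Complex.ofReal) - μ • 1).det = 0)
    (heig : M * fromCols X₁ X₂ +
      K * fromCols X₁ X₂ *
        fromBlocks Λ₁⁻¹ 0 0
          (fromBlocks Λ₃⁻¹ 0 0 (0 : Matrix (Fin nφ) (Fin nφ) ℝ)) = 0)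
    (Γ₁ : Matrix (Fin p) (Fin p) ℝ) (hΓ₁ : Γ₁ = X1uᵀ * Mu * X1u) :
    X₁ᵀ * M * X₂ = 0 ∧ X₁ᵀ * K * X₂ = 0 ∧
    X₁ᵀ * M * X₁ = Γ₁ ∧ Γ₁ᵀ = Γ₁ ∧ IsUnit Γ₁ ∧
    X₁ᵀ * K * X₁ = -(Γ₁ * Λ₁) ∧ Λ₁ᵀ * Γ₁ = Γ₁ * Λ₁ := by
  set N : Matrix (Fin (nu - p) ⊕ Fin nφ) (Fin (nu - p) ⊕ Fin nφ) ℝ :=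
    fromBlocks Λ₃⁻¹ 0 0 (0 : Matrix (Fin nφ) (Fin nφ) ℝ) with hN
  -- det units
  have hKd : IsUnit K.det := (Matrix.isUnit_iff_isUnit_det K).mp hKUnit
  have hΛ₁d : IsUnit Λ₁.det := (Matrix.isUnit_iff_isUnit_det Λ₁).mp hΛ₁Unit
  have hΛ₃d : IsUnit Λ₃.det := (Matrix.isUnit_iff_isUnit_det Λ₃).mp hΛ₃Unit
  have hΛ₁inv : Λ₁⁻¹ * Λ₁ = 1 := Matrix.nonsing_inv_mul _ hΛ₁d
  have hΛ₃inv : Λ₃⁻¹ * Λ₃ = 1 := Matrix.nonsing_inv_mul _ hΛ₃d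
  have hMsymm : Mᵀ = M := by
    rw [hM, fromBlocks_transpose, hMuSymm]
    simp
  -- extract the two block equations
  have h0 : fromCols (M * X₁ + K * X₁ * Λ₁⁻¹) (M * X₂ + K * X₂ * N) = fromCols 0 0 := by
    rw [fromCols_zero, ← heig, mul_fromCols, mul_fromCols, fromCols_mul_fromBlocks,
      fromCols_add']
    simp [hN]
  obtain ⟨hE1, hE2⟩ := (fromCols_ext_iff _ _ _ _).mp h0
  have hMX₁ : M * X₁ = -(K * X₁ * Λ₁⁻¹) := eq_neg_of_add_eq_zero_left hE1
  have hMX₂ : M * X₂ = -(K * X₂ * N) := eq_neg_of_add_eq_zero_left hE2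
  have hKX₁Λ : K * X₁ * Λ₁⁻¹ = -(M * X₁) := eq_neg_of_add_eq_zero_right hE1
  have hKX₁ : K * X₁ = -(M * X₁ * Λ₁) := by
    calc K * X₁ = K * X₁ * (Λ₁⁻¹ * Λ₁) := by rw [hΛ₁inv, Matrix.mul_one]
      _ = (K * X₁ * Λ₁⁻¹) * Λ₁ := by rw [Matrix.mul_assoc (K * X₁)]
      _ = -(M * X₁) * Λ₁ := by rw [hKX₁Λ]
      _ = -(M * X₁ * Λ₁) := by rw [Matrix.neg_mul]
  -- the two expressions for X₁ᵀ M X₂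
  have h_right : X₁ᵀ * M * X₂ = -(X₁ᵀ * K * X₂ * N) := by
    rw [Matrix.mul_assoc, hMX₂, Matrix.mul_neg]
    simp only [Matrix.mul_assoc]
  have h_left : X₁ᵀ * M * X₂ = -((Λ₁⁻¹)ᵀ * (X₁ᵀ * K * X₂)) := by
    have h1 : X₁ᵀ * Mᵀ = -((Λ₁⁻¹)ᵀ * (X₁ᵀ * Kᵀ)) := by
      rw [← transpose_mul, hMX₁, transpose_neg, transpose_mul, transpose_mul]
    rw [hMsymm, hKSymm] at h1
    rw [h1, Matrix.neg_mul, Matrix.mul_assoc, Matrix.mul_assoc]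
  have hcomb : (Λ₁⁻¹)ᵀ * (X₁ᵀ * K * X₂) = X₁ᵀ * K * X₂ * N := by
    have := h_left.symm.trans h_right
    exact neg_inj.mp this
  have hΛ₁T : Λ₁ᵀ * (Λ₁⁻¹)ᵀ = 1 := by rw [← transpose_mul, hΛ₁inv, transpose_one]
  have hBrel : X₁ᵀ * K * X₂ = Λ₁ᵀ * (X₁ᵀ * K * X₂ * N) := by
    calc X₁ᵀ * K * X₂ = (Λ₁ᵀ * (Λ₁⁻¹)ᵀ) * (X₁ᵀ * K * X₂) := by rw [hΛ₁T, Matrix.one_mul]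
      _ = Λ₁ᵀ * ((Λ₁⁻¹)ᵀ * (X₁ᵀ * K * X₂)) := by rw [Matrix.mul_assoc]
      _ = Λ₁ᵀ * (X₁ᵀ * K * X₂ * N) := by rw [hcomb]
  -- block structure of B := X₁ᵀ K X₂
  set B₁ := toCols₁ (X₁ᵀ * K * X₂) with hB₁
  set B₂ := toCols₂ (X₁ᵀ * K * X₂) with hB₂
  have hBcols : fromCols B₁ B₂ = X₁ᵀ * K * X₂ := fromCols_toCols _
  have hBrel2 : fromCols B₁ B₂ = fromCols (Λ₁ᵀ * (B₁ * Λ₃⁻¹)) 0 := by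
    rw [hBcols]
    nth_rewrite 1 [hBrel]
    rw [← hBcols, hN, fromCols_mul_fromBlocks, mul_fromCols]
    simp
  obtain ⟨hB₁eq, hB₂0⟩ := (fromCols_ext_iff _ _ _ _).mp hBrel2
  have hS : Λ₁ᵀ * B₁ = B₁ * Λ₃ := by
    calc Λ₁ᵀ * B₁ = Λ₁ᵀ * (B₁ * (Λ₃⁻¹ * Λ₃)) := by rw [hΛ₃inv, Matrix.mul_one]
      _ = Λ₁ᵀ * (B₁ * Λ₃⁻¹) * Λ₃ := by rw [← Matrix.mul_assoc B₁, ← Matrix.mul_assoc]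
      _ = B₁ * Λ₃ := by rw [← hB₁eq]
  -- Sylvester over ℂ
  have hSc : (Λ₁ᵀ.map Complex.ofReal) * (B₁.map Complex.ofReal)
      = (B₁.map Complex.ofReal) * (Λ₃.map Complex.ofReal) := by
    rw [← map_mul_ofReal, ← map_mul_ofReal, hS]
  have hd : ∀ μ : ℂ, ((Λ₃.map Complex.ofReal) - μ • 1).det = 0 →
      ((Λ₁ᵀ.map Complex.ofReal) - μ • 1).det ≠ 0 := by
    intro μ h3 h1'
    apply hdisj
    refine ⟨μ, ?_, h3⟩
    rwa [Matrix.transpose_map, ← transpose_one, ← transpose_smul, ← transpose_sub,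
      Matrix.det_transpose] at h1'
  have hB₁c : B₁.map Complex.ofReal = 0 :=
    sylvester_unique _ _ _ hSc hd
  have hB₁0 : B₁ = 0 := by
    ext i j
    have := congrFun (congrFun hB₁c i) j
    simpa using this
  have hKorth : X₁ᵀ * K * X₂ = 0 := by
    rw [← hBcols, hB₁0, hB₂0, fromCols_zero]
  have hMorth : X₁ᵀ * M * X₂ = 0 := by
    rw [h_right, hKorth, Matrix.zero_mul, neg_zero]
  -- Γ₁
  have hX₁T : X₁ᵀ = fromCols X1uᵀ X1φᵀ := by rw [hX₁, transpose_fromRows]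
  have hGamma : X₁ᵀ * M * X₁ = Γ₁ := by
    rw [hX₁T, hM, hX₁, fromCols_mul_fromBlocks, fromCols_mul_fromRows, hΓ₁]
    simp
  have hGsymm : Γ₁ᵀ = Γ₁ := by
    rw [← hGamma, transpose_mul, transpose_mul, transpose_transpose, hMsymm, Matrix.mul_assoc]
  have hKX11 : X₁ᵀ * K * X₁ = -(Γ₁ * Λ₁) := by
    rw [Matrix.mul_assoc, hKX₁, Matrix.mul_neg, ← Matrix.mul_assoc, ← Matrix.mul_assoc, hGamma]
  have hΛΓ : Λ₁ᵀ * Γ₁ = Γ₁ * Λ₁ := by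
    have hsym : (X₁ᵀ * K * X₁)ᵀ = X₁ᵀ * K * X₁ := by
      rw [transpose_mul, transpose_mul, transpose_transpose, hKSymm, Matrix.mul_assoc]
    rw [hKX11, transpose_neg, transpose_mul, hGsymm] at hsym
    exact neg_inj.mp hsym
  -- invertibility of Γ₁
  obtain ⟨Binv, hBi1, hBi2⟩ := hXinv
  have hCinj : ∀ v, fromCols X₁ X₂ *ᵥ v = 0 → v = 0 := by
    intro v hv
    have h' : Binv *ᵥ (fromCols X₁ X₂ *ᵥ v) = 0 := by rw [hv, mulVec_zero]
    rwa [mulVec_mulVec, hBi2, one_mulVec] at h'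
  have hCtinj : ∀ z, (fromCols X₁ X₂)ᵀ *ᵥ z = 0 → z = 0 := by
    intro z hz
    have h' : Binvᵀ *ᵥ ((fromCols X₁ X₂)ᵀ *ᵥ z) = 0 := by rw [hz, mulVec_zero]
    rwa [mulVec_mulVec, ← transpose_mul, hBi1, transpose_one, one_mulVec] at h'
  have hKinj : ∀ v, K *ᵥ v = 0 → v = 0 := by
    intro v hv
    have h' : K⁻¹ *ᵥ (K *ᵥ v) = 0 := by rw [hv, mulVec_zero]
    rwa [mulVec_mulVec, Matrix.nonsing_inv_mul _ hKd, one_mulVec] at h'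
  have hX₁inj : ∀ v, X₁ *ᵥ v = 0 → v = 0 := by
    intro v hv
    have h1 : fromCols X₁ X₂ *ᵥ Sum.elim v 0 = 0 := by
      rw [fromCols_mulVec_sumElim, hv, mulVec_zero, add_zero]
    have h2 := hCinj _ h1
    ext i
    exact congrFun h2 (Sum.inl i)
  have hker : ∀ x, Γ₁ *ᵥ x = 0 → x = 0 := by
    intro x hx
    have e2' : X₂ᵀ * M * X₁ = 0 := by
      have h' := congrArg transpose hMorth
      rwa [transpose_mul, transpose_mul, transpose_transpose, hMsymm, transpose_zero, ← Matrix.mul_assoc] at h'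
    have hz : (fromCols X₁ X₂)ᵀ *ᵥ (M *ᵥ (X₁ *ᵥ x)) = 0 := by
      rw [transpose_fromCols, fromRows_mulVec]
      have e1 : X₁ᵀ *ᵥ (M *ᵥ (X₁ *ᵥ x)) = 0 := by
        rw [mulVec_mulVec, mulVec_mulVec, hGamma, hx]
      have e2 : X₂ᵀ *ᵥ (M *ᵥ (X₁ *ᵥ x)) = 0 := by
        rw [mulVec_mulVec, mulVec_mulVec, e2', zero_mulVec]
      rw [e1, e2]
      ext (i | i) <;> rfl
    have hz0 : M *ᵥ (X₁ *ᵥ x) = 0 := hCtinj _ hz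
    have hKv : K *ᵥ ((X₁ * Λ₁⁻¹) *ᵥ x) = 0 := by
      have h' := congrArg (· *ᵥ x) hE1
      simp only [Matrix.add_mulVec, Matrix.zero_mulVec] at h'
      have h3 : (M * X₁) *ᵥ x = 0 := by rw [← mulVec_mulVec, hz0]
      rw [h3, zero_add, Matrix.mul_assoc, ← mulVec_mulVec] at h'
      exact h'
    have h5 : (X₁ * Λ₁⁻¹) *ᵥ x = 0 := hKinj _ hKv
    have h6 : Λ₁⁻¹ *ᵥ x = 0 := hX₁inj _ (by rw [mulVec_mulVec, h5])
    calc x = (Λ₁ * Λ₁⁻¹) *ᵥ x := by rw [Matrix.mul_nonsing_inv _ hΛ₁d, one_mulVec]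
      _ = Λ₁ *ᵥ (Λ₁⁻¹ *ᵥ x) := by rw [mulVec_mulVec]
      _ = 0 := by rw [h6, mulVec_zero]
  have hGunit : IsUnit Γ₁ := by
    rw [← Matrix.mulVec_injective_iff_isUnit]
    intro a b hab
    have h' : Γ₁ *ᵥ (a - b) = 0 := by rw [mulVec_sub, hab, sub_self]
    exact sub_eq_zero.mp (hker _ h')
  exact ⟨hMorth, hKorth, hGamma, hGsymm, hGunit, hKX11, hΛΓ⟩
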